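/- Let P ≻ 0 be n×n, A n×n, B n×m, α > 0 with (A - B Bᵀ P)ᵀ P + P(A - B Bᵀ P) ⪯ -α P. Let γ ≥ 1 and suppose λ ∈ (0,1] satisfies γλ ≥ 1. Then for the saturated control v = -λ γ Bᵀ P x, one has 2 xᵀ P(Ax + Bv) ≤ -α xᵀ P x - 2(γλ - 1) ‖Bᵀ P x‖² ≤ -α xᵀ P x. -/

import Mathlib

open Matrix

/-- Lyapunov decrease for the saturated control `v = -λ γ Bᵀ P x` with `γλ ≥ 1`:
`2 xᵀ P (A x + B v) ≤ -α xᵀ P x - 2(γλ-1)‖Bᵀ P x‖² ≤ -α xᵀ P x`. -/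
theorem stmt7 (n m : ℕ) (P A : Matrix (Fin n) (Fin n) ℝ) (B : Matrix (Fin n) (Fin m) ℝ)
    (α γ lam : ℝ) (hα : 0 < α) (hγ : 1 ≤ γ)
    (hlam : lam ∈ Set.Ioc (0 : ℝ) 1) (hγlam : 1 ≤ γ * lam)
    (hP : P.PosDef)
    (hLyap : ((-(α • P)) - ((A - B * Bᵀ * P)ᵀ * P + P * (A - B * Bᵀ * P))).PosSemidef)
    (x : Fin n → ℝ) :
    let v : Fin m → ℝ := -((lam * γ) • (Bᵀ *ᵥ (P *ᵥ x)))
    2 * (x ⬝ᵥ (P *ᵥ (A *ᵥ x + B *ᵥ v))) ≤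
        -α * (x ⬝ᵥ (P *ᵥ x)) -
          2 * (γ * lam - 1) * ((Bᵀ *ᵥ (P *ᵥ x)) ⬝ᵥ (Bᵀ *ᵥ (P *ᵥ x))) ∧
      -α * (x ⬝ᵥ (P *ᵥ x)) -
          2 * (γ * lam - 1) * ((Bᵀ *ᵥ (P *ᵥ x)) ⬝ᵥ (Bᵀ *ᵥ (P *ᵥ x))) ≤
        -α * (x ⬝ᵥ (P *ᵥ x)) := by
  intro v
  set y := Bᵀ *ᵥ (P *ᵥ x) with hy
  have hyy : 0 ≤ y ⬝ᵥ y := by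
    simpa [dotProduct] using Finset.sum_nonneg fun i _ => mul_self_nonneg (y i)
  have hPs : Pᵀ = P := by
    have := hP.1
    simpa [Matrix.IsHermitian, conjTranspose_eq_transpose_of_trivial] using this
  have key : ∀ z : Fin n → ℝ, x ⬝ᵥ (P *ᵥ z) = (P *ᵥ x) ⬝ᵥ z := by
    intro z
    rw [dotProduct_mulVec]
    conv_lhs => rw [← hPs]
    rw [vecMul_transpose]
  have hBy : (P *ᵥ x) ⬝ᵥ (B *ᵥ y) = y ⬝ᵥ y := by
    rw [dotProduct_mulVec, ← mulVec_transpose, ← hy]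
  have h1 := hLyap.dotProduct_mulVec_nonneg x
  simp only [sub_mulVec, add_mulVec, neg_mulVec, smul_mulVec, dotProduct_sub,
    dotProduct_add, dotProduct_neg, dotProduct_smul, star_trivial, smul_eq_mul] at h1
  have e1 : x ⬝ᵥ ((A - B * Bᵀ * P)ᵀ * P) *ᵥ x = (P *ᵥ x) ⬝ᵥ (A *ᵥ x) - y ⬝ᵥ y := by
    rw [← mulVec_mulVec, dotProduct_mulVec, vecMul_transpose, sub_mulVec, sub_dotProduct,
      dotProduct_comm]
    congr 1
    rw [Matrix.mul_assoc, ← mulVec_mulVec, ← mulVec_mulVec, ← hy, dotProduct_comm]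
    exact hBy
  have e2 : x ⬝ᵥ (P * (A - B * Bᵀ * P)) *ᵥ x = (P *ᵥ x) ⬝ᵥ (A *ᵥ x) - y ⬝ᵥ y := by
    rw [← mulVec_mulVec, key, sub_mulVec, dotProduct_sub]
    congr 1
    rw [Matrix.mul_assoc, ← mulVec_mulVec, ← mulVec_mulVec, ← hy]
    exact hBy
  rw [e1, e2] at h1
  have lhs : x ⬝ᵥ (P *ᵥ (A *ᵥ x + B *ᵥ v)) =
      (P *ᵥ x) ⬝ᵥ (A *ᵥ x) - (lam * γ) * (y ⬝ᵥ y) := by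
    show x ⬝ᵥ (P *ᵥ (A *ᵥ x + B *ᵥ (-((lam * γ) • y)))) = _
    rw [mulVec_add, dotProduct_add, key, key, mulVec_neg, mulVec_smul, dotProduct_neg,
      dotProduct_smul, hBy, smul_eq_mul]
    ring
  constructor
  · rw [lhs]; nlinarith [h1, hyy]
  · nlinarith [hyy, hγlam]
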